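/- Let G be a unicyclic graph on n vertices that is not isomorphic to K_{1,n-1}^+. Then there exist adjacent vertices u and v in G such that u has a neighbor that is neither v nor a neighbor of v, and v has a neighbor that is neither u nor a neighbor of u. -/

import Mathlib

open SimpleGraph Finset

open scoped Classical in
/-- The adjacency matrix of a graph over `ℝ` (using classical decidability). -/
noncomputable def adjMat {V : Type*} [Fintype V] [DecidableEq V] (G : SimpleGraph V) :
    Matrix V V ℝ :=
  fun a b => if G.Adj a b then 1 else 0

theorem adjMat_isHermitian {V : Type*} [Fintype V] [DecidableEq V] (G : SimpleGraph V) :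
    (adjMat G).IsHermitian := by
  ext a b
  rw [Matrix.conjTranspose_apply]
  by_cases h : G.Adj a b
  · simp [adjMat, h, h.symm]
  · simp [adjMat, h, mt (fun h' : G.Adj b a => h'.symm) h]

/-- The spectral radius (specRad) (largest adjacency eigenvalue) of a graph. -/
noncomputable def specRad {V : Type*} [Fintype V] [DecidableEq V]
    (G : SimpleGraph V) : ℝ :=
  ⨆ a : V, (adjMat_isHermitian G).eigenvalues a

/-- A cactus: any two distinct cycles (distinct as edge sets) share at most one vertex. -/
def IsCactus {V : Type*} [DecidableEq V] (G : SimpleGraph V) : Prop :=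
  ∀ ⦃u v : V⦄ (c₁ : G.Walk u u) (c₂ : G.Walk v v), c₁.IsCycle → c₂.IsCycle →
    c₁.edges.toFinset ≠ c₂.edges.toFinset →
      (c₁.support.toFinset ∩ c₂.support.toFinset).card ≤ 1

/-- A unicyclic graph: connected with exactly one cycle (one cycle edge set). -/
def Unicyclic {V : Type*} [DecidableEq V] (G : SimpleGraph V) : Prop :=
  G.Connected ∧ ∃! E : Finset (Sym2 V), ∃ (w : V) (c : G.Walk w w),
    c.IsCycle ∧ c.edges.toFinset = E

/-- The star `K_{1,n-1}` on `Fin n` with center `0`. -/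
def starGraph (n : ℕ) : SimpleGraph (Fin n) where
  Adj a b := a ≠ b ∧ ((a : ℕ) = 0 ∨ (b : ℕ) = 0)
  symm := ⟨fun a b h => by tauto⟩
  loopless := ⟨fun a h => by tauto⟩

/-- `K_{1,n-1}^+`: the star plus one edge between the leaves `1` and `2`. -/
def starPlus (n : ℕ) : SimpleGraph (Fin n) where
  Adj a b := a ≠ b ∧ ((a : ℕ) = 0 ∨ (b : ℕ) = 0 ∨ ((a : ℕ) ≤ 2 ∧ (b : ℕ) ≤ 2))
  symm := ⟨fun a b h => by tauto⟩
  loopless := ⟨fun a h => by tauto⟩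

/-- `H_n`: the star `K_{1,n-1}` plus `⌊(n-1)/2⌋` independent edges `(1,2), (3,4), …`
between pairs of leaves. -/
def Hgraph (n : ℕ) : SimpleGraph (Fin n) where
  Adj a b := a ≠ b ∧ ((a : ℕ) = 0 ∨ (b : ℕ) = 0 ∨
    ((a : ℕ) % 2 = 1 ∧ (b : ℕ) = a + 1) ∨ ((b : ℕ) % 2 = 1 ∧ (a : ℕ) = b + 1))
  symm := ⟨fun a b h => by tauto⟩
  loopless := ⟨fun a h => by tauto⟩

/-- Rewiring: delete the edges `v w` and add the edges `u w` for `w ∈ S`. -/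
def rewire {V : Type*} (G : SimpleGraph V) (u v : V) (S : Set V) : SimpleGraph V :=
  SimpleGraph.fromEdgeSet ((G.edgeSet \ {e | ∃ w ∈ S, e = s(v, w)}) ∪ {e | ∃ w ∈ S, e = s(u, w)})

/-- An edge lies in a triangle of `G`. -/
def InTriangle {V : Type*} (G : SimpleGraph V) (e : Sym2 V) : Prop :=
  ∃ a b c : V, G.Adj a b ∧ G.Adj b c ∧ G.Adj a c ∧
    (e = s(a, b) ∨ e = s(b, c) ∨ e = s(a, c))

section Aux
variable {V : Type*} [DecidableEq V] {G : SimpleGraph V}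

lemma triangle_cycle {a b c : V} (hab : G.Adj a b) (hbc : G.Adj b c) (hca : G.Adj c a) :
    ∃ cyc : G.Walk a a, cyc.IsCycle ∧
      cyc.edges.toFinset = ({s(a,b), s(b,c), s(c,a)} : Finset (Sym2 V)) := by
  classical
  refine ⟨.cons hab (.cons hbc (.cons hca .nil)), ?_, by simp [Finset.ext_iff]⟩
  have h1 : a ≠ b := hab.ne
  have h2 : b ≠ c := hbc.ne
  have h3 : c ≠ a := hca.ne
  rw [SimpleGraph.Walk.isCycle_def]
  refine ⟨?_, by simp, ?_⟩
  · rw [SimpleGraph.Walk.isTrail_def]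
    simp [Sym2.eq_iff]; tauto
  · simp; tauto

lemma cycles_edges_eq (hG : Unicyclic G) {u v : V} {c1 : G.Walk u u} {c2 : G.Walk v v}
    (h1 : c1.IsCycle) (h2 : c2.IsCycle) : c1.edges.toFinset = c2.edges.toFinset := by
  obtain ⟨E, -, hun⟩ := hG.2
  rw [hun _ ⟨u, c1, h1, rfl⟩, hun _ ⟨v, c2, h2, rfl⟩]

omit [DecidableEq V] in
lemma reach_closed {S : Set V} (hS : ∀ a ∈ S, ∀ b, G.Adj a b → b ∈ S) {a b : V}
    (w : G.Walk a b) (ha : a ∈ S) : b ∈ S := by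
  induction w with
  | nil => exact ha
  | cons h p ih => exact ih (hS _ ha _ h)

lemma card_triple_le {α : Type*} [DecidableEq α] (x y z : α) :
    ({x, y, z} : Finset α).card ≤ 3 := by
  apply (Finset.card_insert_le _ _).trans
  have h := Finset.card_insert_le y ({z} : Finset α)
  simp at h ⊢; omega

/-- In a unicyclic graph whose cycle is longer than 3, there is no triangle. -/
lemma no_triangle_of_long (hG : Unicyclic G) {w : V} {c : G.Walk w w} (hc : c.IsCycle)
    (hlen : 4 ≤ c.length) {a b d : V} (hab : G.Adj a b) (hbd : G.Adj b d)
    (hda : G.Adj d a) : False := by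
  obtain ⟨cyc, hcyc, hedges⟩ := triangle_cycle hab hbd hda
  have heq := cycles_edges_eq hG hcyc hc
  have hcard : c.edges.toFinset.card = c.length := by
    rw [List.toFinset_card_of_nodup hc.edges_nodup, SimpleGraph.Walk.length_edges]
  rw [hedges] at heq
  have := card_triple_le (s(a,b)) (s(b,d)) (s(d,a))
  rw [heq, hcard] at this
  omega

end Aux

lemma build_iso {n : ℕ} {G : SimpleGraph (Fin n)} {p q r : Fin n}
    (hpq : p ≠ q) (hpr : p ≠ r) (hqr : q ≠ r)
    (hchar : ∀ a b, G.Adj a b ↔ a ≠ b ∧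
      (a = p ∨ b = p ∨ ((a = p ∨ a = q ∨ a = r) ∧ (b = p ∨ b = q ∨ b = r)))) :
    Nonempty (G ≃g starPlus n) := by
  classical
  have hn : 3 ≤ n := by
    have hcard : ({p, q, r} : Finset (Fin n)).card = 3 := by
      rw [Finset.card_insert_of_notMem (by simp [hpq, hpr]),
          Finset.card_insert_of_notMem (by simp [hqr]), Finset.card_singleton]
    have h := Finset.card_le_univ ({p, q, r} : Finset (Fin n))
    simp only [hcard, Finset.card_univ, Fintype.card_fin] at h
    exact h
  obtain ⟨z0, hz0⟩ : ∃ z : Fin n, (z : ℕ) = 0 := ⟨⟨0, by omega⟩, rfl⟩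
  obtain ⟨z1, hz1⟩ : ∃ z : Fin n, (z : ℕ) = 1 := ⟨⟨1, by omega⟩, rfl⟩
  obtain ⟨z2, hz2⟩ : ∃ z : Fin n, (z : ℕ) = 2 := ⟨⟨2, by omega⟩, rfl⟩
  have hz01 : z0 ≠ z1 := by intro h; rw [h, hz1] at hz0; omega
  have hz02 : z0 ≠ z2 := by intro h; rw [h, hz2] at hz0; omega
  have hz12 : z1 ≠ z2 := by intro h; rw [h, hz2] at hz1; omega
  set e1 := Equiv.swap p z0 with he1def
  set e2 := Equiv.swap (e1 q) z1 with he2def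
  set e3 := Equiv.swap (e2 (e1 r)) z2 with he3def
  set f := e1.trans (e2.trans e3) with hfdef
  have he1p : e1 p = z0 := Equiv.swap_apply_left p z0
  have he1q : e1 q ≠ z0 := by rw [← he1p]; exact e1.injective.ne hpq.symm
  have he1r : e1 r ≠ z0 := by rw [← he1p]; exact e1.injective.ne hpr.symm
  have he2z0 : e2 z0 = z0 := Equiv.swap_apply_of_ne_of_ne (Ne.symm he1q) hz01
  have he2q : e2 (e1 q) = z1 := Equiv.swap_apply_left _ _
  have he2r0 : e2 (e1 r) ≠ z0 := by rw [← he2z0]; exact e2.injective.ne he1r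
  have he2r1 : e2 (e1 r) ≠ z1 := by
    rw [← he2q]; exact e2.injective.ne (e1.injective.ne hqr.symm)
  have hfp : f p = z0 := by
    show e3 (e2 (e1 p)) = z0
    rw [he1p, he2z0, he3def]
    exact Equiv.swap_apply_of_ne_of_ne (Ne.symm he2r0) hz02
  have hfq : f q = z1 := by
    show e3 (e2 (e1 q)) = z1
    rw [he2q, he3def]
    exact Equiv.swap_apply_of_ne_of_ne (Ne.symm he2r1) hz12
  have hfr : f r = z2 := by
    show e3 (e2 (e1 r)) = z2
    rw [he3def]
    exact Equiv.swap_apply_left _ _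
  have hP : ∀ a, a = p ↔ ((f a : ℕ) = 0) := by
    intro a
    constructor
    · rintro rfl; rw [hfp, hz0]
    · intro h
      apply f.injective
      rw [hfp]
      apply Fin.ext
      rw [h, hz0]
  have hT : ∀ a, (a = p ∨ a = q ∨ a = r) ↔ ((f a : ℕ) ≤ 2) := by
    intro a
    constructor
    · rintro (rfl | rfl | rfl)
      · rw [hfp, hz0]; omega
      · rw [hfq, hz1]; omega
      · rw [hfr, hz2]
    · intro h
      have h012 : (f a : ℕ) = 0 ∨ (f a : ℕ) = 1 ∨ (f a : ℕ) = 2 := by omega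
      rcases h012 with h' | h' | h'
      · exact Or.inl (f.injective (by rw [hfp]; exact Fin.ext (by rw [h', hz0])))
      · exact Or.inr (Or.inl (f.injective (by rw [hfq]; exact Fin.ext (by rw [h', hz1]))))
      · exact Or.inr (Or.inr (f.injective (by rw [hfr]; exact Fin.ext (by rw [h', hz2]))))
  refine ⟨⟨f, ?_⟩⟩
  intro a b
  have hsp : (starPlus n).Adj (f a) (f b) ↔ f a ≠ f b ∧
      ((f a : ℕ) = 0 ∨ (f b : ℕ) = 0 ∨ ((f a : ℕ) ≤ 2 ∧ (f b : ℕ) ≤ 2)) := Iff.rfl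
  rw [hsp, hchar a b, f.injective.ne_iff, ← hP a, ← hP b, ← hT a, ← hT b]


lemma triangle_case {n : ℕ} {G : SimpleGraph (Fin n)} (hG : Unicyclic G)
    (hiso : ¬ Nonempty (G ≃g starPlus n)) {w v1 v2 : Fin n}
    (h1 : G.Adj w v1) (h2 : G.Adj v1 v2) (h4 : G.Adj v2 w) :
    ∃ u v : Fin n, G.Adj u v ∧
      (∃ a, G.Adj u a ∧ a ≠ v ∧ ¬ G.Adj v a) ∧
      (∃ b, G.Adj v b ∧ b ≠ u ∧ ¬ G.Adj u b) := by
  classical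
  by_contra hgoal
  push_neg at hgoal
  set inT : Fin n → Prop := fun a => a = w ∨ a = v1 ∨ a = v2 with hinT
  -- any vertex of any triangle lies in {w, v1, v2}
  have tri1 : ∀ a b c : Fin n, G.Adj a b → G.Adj b c → G.Adj c a → inT a := by
    intro a b c hab hbc hca
    obtain ⟨cy1, hcy1, he1⟩ := triangle_cycle hab hbc hca
    obtain ⟨cy2, hcy2, he2⟩ := triangle_cycle h1 h2 h4
    have heq := cycles_edges_eq hG hcy1 hcy2
    rw [he1, he2] at heq
    have hm : s(a,b) ∈ ({s(w,v1), s(v1,v2), s(v2,w)} : Finset (Sym2 (Fin n))) := by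
      rw [← heq]; simp
    simp only [Finset.mem_insert, Finset.mem_singleton, Sym2.eq_iff] at hm
    rw [hinT]
    tauto
  have tri : ∀ a b c : Fin n, G.Adj a b → G.Adj b c → G.Adj c a →
      inT a ∧ inT b ∧ inT c := fun a b c hab hbc hca =>
    ⟨tri1 a b c hab hbc hca, tri1 b c a hbc hca hab, tri1 c a b hca hab hbc⟩
  -- pairwise adjacency within the triangle
  have Tadj : ∀ s t : Fin n, inT s → inT t → s ≠ t → G.Adj s t := by
    intro s t hs ht hne
    rcases hs with rfl | rfl | rfl <;> rcases ht with rfl | rfl | rfl <;>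
      first
        | exact absurd rfl hne
        | exact h1 | exact h2 | exact h4 | exact h1.symm | exact h2.symm | exact h4.symm
  -- the key dichotomy for edges leaving the triangle
  have Key : ∀ u v : Fin n, G.Adj u v → ¬ inT u →
      ((∀ a, G.Adj u a → a = v) ∨ (∀ a, G.Adj v a → a = u)) := by
    intro u v huv hu
    by_cases hA : ∃ a, G.Adj u a ∧ a ≠ v ∧ ¬ G.Adj v a
    · right
      intro b hvb
      by_contra hbu
      have hub := hgoal u v huv hA b hvb hbu
      exact hu (tri u v b huv hvb (G.adj_symm hub)).1
    · left
      intro a hua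
      by_contra hav
      exact hA ⟨a, hua, hav, fun hva => hu (tri u v a huv hva (G.adj_symm hua)).1⟩
  -- no triangle vertex has all its neighbours equal to a fixed vertex
  have NotAll : ∀ t x : Fin n, inT t → ¬ (∀ a, G.Adj t a → a = x) := by
    intro t x ht hall
    rcases ht with rfl | rfl | rfl
    · exact h2.ne (((hall v1 h1).trans (hall v2 h4.symm).symm))
    · exact h4.ne (((hall v2 h2).trans (hall w h1.symm).symm))
    · exact h1.ne (((hall w h4).trans (hall v1 h2.symm).symm))
  -- outside vertices are pendant
  have Pendant : ∀ v : Fin n, ¬ inT v → ∀ t : Fin n, G.Adj t v → inT t →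
      (∀ a, G.Adj v a → a = t) := by
    intro v hv t htv ht
    rcases Key v t (G.adj_symm htv) hv with h | h
    · exact h
    · exact absurd h (NotAll t v ht)
  -- connectivity: every vertex is in the triangle or adjacent to it
  have hS : ∀ v : Fin n, inT v ∨ ∃ t, inT t ∧ G.Adj t v := by
    intro v
    have hreach : G.Reachable w v := hG.1.preconnected w v
    obtain ⟨pth⟩ := hreach
    refine reach_closed (S := {a | inT a ∨ ∃ t, inT t ∧ G.Adj t a}) ?_ pth
      (Or.inl (Or.inl rfl))
    rintro a (ha | ⟨t, ht, hta⟩) b hab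
    · exact Or.inr ⟨a, ha, hab⟩
    · by_cases ha' : inT a
      · exact Or.inr ⟨a, ha', hab⟩
      · have := Pendant a ha' t hta ht b hab
        exact Or.inl (this ▸ ht)
  -- two different attachment points are impossible
  have OneAttach : ∀ t t' u u' : Fin n, inT t → inT t' → ¬ inT u → ¬ inT u' →
      G.Adj t u → G.Adj t' u' → t = t' := by
    intro t t' u u' ht ht' hu hu' htu ht'u'
    by_contra hne
    have htt' : G.Adj t t' := Tadj t t' ht ht' hne
    have hA : ∃ a, G.Adj t a ∧ a ≠ t' ∧ ¬ G.Adj t' a := by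
      refine ⟨u, htu, fun h => hu (h ▸ ht'), fun h => hu (tri t t' u htt' h (G.adj_symm htu)).2.2⟩
    have := hgoal t t' htt' hA u' ht'u' (fun h => hu' (h ▸ ht))
    exact hu' (tri t t' u' htt' ht'u' (G.adj_symm this)).2.2
  -- choose the attachment centre p
  have hcenter : ∃ p, inT p ∧ ∀ v, ¬ inT v → G.Adj p v ∧ (∀ a, G.Adj v a → a = p) := by
    by_cases hex : ∃ v, ¬ inT v
    · obtain ⟨v0, hv0⟩ := hex
      obtain ⟨t0, ht0, ht0v0⟩ := (hS v0).resolve_left hv0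
      refine ⟨t0, ht0, ?_⟩
      intro v hv
      obtain ⟨t, ht, htv⟩ := (hS v).resolve_left hv
      have : t = t0 := OneAttach t t0 v v0 ht ht0 hv hv0 htv ht0v0
      subst this
      exact ⟨htv, Pendant v hv t htv ht⟩
    · push_neg at hex
      exact ⟨w, Or.inl rfl, fun v hv => absurd (hex v) hv⟩
  obtain ⟨p, hpT, Hp⟩ := hcenter
  -- adjacency characterisation
  have hchar : ∀ a b : Fin n, G.Adj a b ↔ a ≠ b ∧ (a = p ∨ b = p ∨ (inT a ∧ inT b)) := by
    intro a b
    constructor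
    · intro hadj
      refine ⟨hadj.ne, ?_⟩
      by_cases ha : inT a
      · by_cases hb : inT b
        · exact Or.inr (Or.inr ⟨ha, hb⟩)
        · exact Or.inl ((Hp b hb).2 a (G.adj_symm hadj))
      · exact Or.inr (Or.inl ((Hp a ha).2 b hadj))
    · rintro ⟨hne, (rfl | rfl | ⟨ha, hb⟩)⟩
      · by_cases hb : inT b
        · exact Tadj a b hpT hb hne
        · exact (Hp b hb).1
      · by_cases ha : inT a
        · exact Tadj a b ha hpT hne
        · exact G.adj_symm (Hp a ha).1
      · exact Tadj a b ha hb hne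
  -- build the isomorphism
  apply hiso
  rcases hpT with rfl | rfl | rfl
  · exact build_iso h1.ne h4.ne.symm h2.ne
      (fun a b => by rw [hchar a b] <;> simp only [hinT] <;> tauto)
  · exact build_iso h1.ne.symm h2.ne h4.ne.symm
      (fun a b => by rw [hchar a b] <;> simp only [hinT] <;> tauto)
  · exact build_iso h4.ne h2.ne.symm h1.ne
      (fun a b => by rw [hchar a b] <;> simp only [hinT] <;> tauto)


theorem unicyclic_exists_good_adjacent_pair (n : ℕ) (G : SimpleGraph (Fin n))
    (hG : Unicyclic G) (hiso : ¬ Nonempty (G ≃g starPlus n)) :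
    ∃ u v : Fin n, G.Adj u v ∧
      (∃ a, G.Adj u a ∧ a ≠ v ∧ ¬ G.Adj v a) ∧
      (∃ b, G.Adj v b ∧ b ≠ u ∧ ¬ G.Adj u b) := by
  classical
  obtain ⟨E, ⟨w, c, hc, hE⟩, -⟩ := hG.2
  clear hE
  have h3 := hc.three_le_length
  rcases c with - | ⟨h1, q1⟩
  · simp at h3
  rename_i v1
  rcases q1 with - | ⟨h2, q2⟩
  · simp at h3
  rename_i v2
  rcases q2 with - | ⟨h4, q3⟩
  · simp at h3
  rename_i v3
  rcases q3 with - | ⟨h5, q4⟩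
  · -- cycle of length 3 : triangle w v1 v2 (v3 = w)
    exact triangle_case hG hiso h1 h2 h4
  · -- cycle of length ≥ 4
    rename_i v4
    have hlen : 4 ≤ (SimpleGraph.Walk.cons h1 (.cons h2 (.cons h4 (.cons h5 q4)))).length := by
      simp only [SimpleGraph.Walk.length_cons]; omega
    have hnd := (SimpleGraph.Walk.isCycle_def _).mp hc |>.2.2
    simp [SimpleGraph.Walk.support_cons] at hnd
    have hwmem : w ∈ q4.support := SimpleGraph.Walk.end_mem_support q4
    -- distinctness facts
    have hv1v3 : v1 ≠ v3 := hnd.1.2.1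
    have hv2w : v2 ≠ w := fun h => hnd.2.1.2 (by rw [h]; exact hwmem)
    refine ⟨v1, v2, h2, ⟨w, h1.symm, Ne.symm hv2w, ?_⟩, ⟨v3, h4, hv1v3.symm, ?_⟩⟩
    · intro hadj
      exact no_triangle_of_long hG hc hlen h1 h2 hadj
    · intro hadj
      exact no_triangle_of_long hG hc hlen h2 h4 (G.adj_symm hadj)
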